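/- arXiv:1112.0864 — 4 statements merged into one kernel-verified Lean document; each statement's English description precedes it below -/
import Mathlib

section
/- In the Lie algebra t_{g,n}, for distinct indices i, j, k: [t_{ij}, t_{ik} + t_{jk}] = 0. -/
open scoped BigOperators

noncomputable section

/-- The symplectic vector space of dimension `2g`: pairs `(p, q)` of coordinate vectors. -/
abbrev SpV (g : ℕ) := (Fin g → ℂ) × (Fin g → ℂ)

/-- The standard symplectic form on `SpV g`, with `⟨x_a, y_b⟩ = δ_{ab}`. -/
def sympl (g : ℕ) (v w : SpV g) : ℂ := ∑ a : Fin g, (v.1 a * w.2 a - v.2 a * w.1 a)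

/-- The basis vector `x_a` of the symplectic vector space. -/
def bX (g : ℕ) (a : Fin g) : SpV g := (Pi.single a 1, 0)

/-- The basis vector `y_a` of the symplectic vector space. -/
def bY (g : ℕ) (a : Fin g) : SpV g := (0, Pi.single a 1)

/-- A realization of the generators and defining relations of the Lie algebra `t_{g,n}`
in a complex Lie algebra `L`: linear maps `v ↦ v^i` and elements `t_{ij}` satisfying
`[v^i, w^j] = ⟨v,w⟩ t_{ij}` for `i ≠ j`, `∑_a [x_a^i, y_a^i] = - ∑_{j ≠ i} t_{ij}`, and
`[v^i, t_{jk}] = 0` for `i, j, k` distinct. -/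
structure TRel (g n : ℕ) (L : Type*) [LieRing L] [LieAlgebra ℂ L] where
  ι : Fin n → SpV g →ₗ[ℂ] L
  t : Fin n → Fin n → L
  rel_pair : ∀ i j : Fin n, i ≠ j → ∀ v w : SpV g, ⁅ι i v, ι j w⁆ = sympl g v w • t i j
  rel_surf : ∀ i : Fin n,
    (∑ a : Fin g, ⁅ι i (bX g a), ι i (bY g a)⁆)
      = - ∑ j ∈ Finset.univ.filter (fun j => j ≠ i), t i j
  rel_cent : ∀ i j k : Fin n, i ≠ j → i ≠ k → j ≠ k → ∀ v : SpV g, ⁅ι i v, t j k⁆ = 0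
lemma lie_sum' {L : Type*} [LieRing L] [LieAlgebra ℂ L] (x : L) {α : Type*}
    (s : Finset α) (f : α → L) : ⁅x, ∑ a ∈ s, f a⁆ = ∑ a ∈ s, ⁅x, f a⁆ :=
  map_sum (LieAlgebra.ad ℂ L x) f s

lemma sympl_bXY (g : ℕ) (a : Fin g) : sympl g (bX g a) (bY g a) = 1 := by
  simp [sympl, bX, bY, Pi.single_apply]

lemma sympl_bYX (g : ℕ) (a : Fin g) : sympl g (bY g a) (bX g a) = -1 := by
  simp [sympl, bX, bY, Pi.single_apply]

section
variable {g n : ℕ} {L : Type*} [LieRing L] [LieAlgebra ℂ L] (D : TRel g n L)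

lemma t_eq_bracket (hg : 1 ≤ g) {i j : Fin n} (hij : i ≠ j) :
    D.t i j = ⁅D.ι i (bX g ⟨0, hg⟩), D.ι j (bY g ⟨0, hg⟩)⁆ := by
  rw [D.rel_pair i j hij, sympl_bXY, one_smul]

lemma t_symm (hg : 1 ≤ g) {i j : Fin n} (hij : i ≠ j) : D.t i j = D.t j i := by
  have h1 := D.rel_pair i j hij (bX g ⟨0, hg⟩) (bY g ⟨0, hg⟩)
  have h2 := D.rel_pair j i hij.symm (bY g ⟨0, hg⟩) (bX g ⟨0, hg⟩)
  rw [sympl_bXY, one_smul] at h1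
  rw [sympl_bYX, neg_one_smul] at h2
  rw [← h1, ← lie_skew, h2, neg_neg]

lemma t_brkk (hg : 1 ≤ g) {i j k : Fin n} (hij : i ≠ j) (hik : i ≠ k) (hjk : j ≠ k)
    (v w : SpV g) : ⁅D.t i j, ⁅D.ι k v, D.ι k w⁆⁆ = 0 := by
  have hv : ⁅D.t i j, D.ι k v⁆ = 0 := by
    rw [← lie_skew, D.rel_cent k i j hik.symm hjk.symm hij, neg_zero]
  have hw : ⁅D.t i j, D.ι k w⁆ = 0 := by
    rw [← lie_skew, D.rel_cent k i j hik.symm hjk.symm hij, neg_zero]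
  rw [leibniz_lie, hv, hw, zero_lie, lie_zero, add_zero]

lemma t_tt_disj (hg : 1 ≤ g) {i j k m : Fin n} (hij : i ≠ j) (hik : i ≠ k) (him : i ≠ m)
    (hjk : j ≠ k) (hjm : j ≠ m) (hkm : k ≠ m) : ⁅D.t i j, D.t k m⁆ = 0 := by
  rw [t_eq_bracket D hg hkm]
  have hv : ⁅D.t i j, D.ι k (bX g ⟨0, hg⟩)⁆ = 0 := by
    rw [← lie_skew, D.rel_cent k i j hik.symm hjk.symm hij, neg_zero]
  have hw : ⁅D.t i j, D.ι m (bY g ⟨0, hg⟩)⁆ = 0 := by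
    rw [← lie_skew, D.rel_cent m i j him.symm hjm.symm hij, neg_zero]
  rw [leibniz_lie, hv, hw, zero_lie, lie_zero, add_zero]

end

/-- In the Lie algebra `t_{g,n}` (with `g ≥ 1`), for distinct indices
`i, j, k` one has `[t_{ij}, t_{ik} + t_{jk}] = 0`. -/
theorem tRel_tt_comm {g n : ℕ} (hg : 1 ≤ g) {L : Type*} [LieRing L] [LieAlgebra ℂ L]
    (D : TRel g n L) : ∀ i j k : Fin n, i ≠ j → i ≠ k → j ≠ k →
      ⁅D.t i j, D.t i k + D.t j k⁆ = 0 := by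
  intro i j k hij hik hjk
  have hsum : ⁅D.t i j, ∑ a : Fin g, ⁅D.ι k (bX g a), D.ι k (bY g a)⁆⁆ = 0 := by
    rw [lie_sum']
    exact Finset.sum_eq_zero fun a _ => t_brkk D hg hij hik hjk _ _
  rw [D.rel_surf k, lie_neg, lie_sum', neg_eq_zero] at hsum
  have hzero : ∀ m ∈ Finset.univ.filter (fun m => m ≠ k), m ∉ ({i, j} : Finset (Fin n)) →
      ⁅D.t i j, D.t k m⁆ = 0 := by
    intro m hm hnm
    simp only [Finset.mem_insert, Finset.mem_singleton, not_or] at hnm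
    simp only [Finset.mem_filter] at hm
    exact t_tt_disj D hg hij hik (Ne.symm hnm.1) hjk (Ne.symm hnm.2) (Ne.symm hm.2)
  have hsub : ({i, j} : Finset (Fin n)) ⊆ Finset.univ.filter (fun m => m ≠ k) := by
    intro m hm
    simp only [Finset.mem_insert, Finset.mem_singleton] at hm
    simp only [Finset.mem_filter, Finset.mem_univ, true_and]
    rcases hm with h | h <;> subst h
    · exact hik
    · exact hjk
  have := Finset.sum_subset hsub (fun m hm hnm => hzero m hm hnm)
  rw [← this] at hsum
  rw [Finset.sum_pair hij] at hsum
  rw [lie_add, t_symm D hg hik, t_symm D hg hjk]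
  exact hsum
end
end

section
/- The Lie algebra t_{g,n} decomposes as a semidirect product t_{g,n} ≅ u ⋊ f_g^{⊕n}, where u is the kernel of the surjection t_{g,n} → f_g^{⊕n} killing the y_a^i, and the splitting f_g^{⊕n} → t_{g,n} sends the a-th generator of the i-th copy to x_a^i. -/
open scoped BigOperators DirectSum

noncomputable section

/-- Generators of the Lie algebra `t_{g,n}`: `x_a^i`, `y_a^i` (`a ∈ [g]`, `i ∈ [n]`) and
`t_{ij}` (`i ≠ j ∈ [n]`). -/
inductive TGen (g n : ℕ) : Type
  | x : Fin g → Fin n → TGen g n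
  | y : Fin g → Fin n → TGen g n
  | t : Fin n → Fin n → TGen g n

/-- The free complex Lie algebra on the generators of `t_{g,n}`. -/
abbrev TFree (g n : ℕ) := FreeLieAlgebra ℂ (TGen g n)

/-- The generator `x_a^i`. -/
def gX {g n : ℕ} (a : Fin g) (i : Fin n) : TFree g n := FreeLieAlgebra.of ℂ (TGen.x a i)

/-- The generator `y_a^i`. -/
def gY {g n : ℕ} (a : Fin g) (i : Fin n) : TFree g n := FreeLieAlgebra.of ℂ (TGen.y a i)

/-- The generator `t_{ij}`. -/
def gT {g n : ℕ} (i j : Fin n) : TFree g n := FreeLieAlgebra.of ℂ (TGen.t i j)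

/-- The defining relations of `t_{g,n}`:
`[x_a^i, y_b^j] = δ_{ab} t_{ij}`, `[x_a^i, x_b^j] = [y_a^i, y_b^j] = 0` for `i ≠ j`,
`∑_a [x_a^i, y_a^i] = − ∑_{j ≠ i} t_{ij}`, and `[v^i, t_{jk}] = 0` for `i, j, k`
distinct, `v ∈ {x_a, y_a}`. -/
def tRels (g n : ℕ) : Set (TFree g n) :=
  {z | ∃ a b : Fin g, ∃ i j : Fin n, i ≠ j ∧
      z = ⁅gX a i, gY b j⁆ - if a = b then gT i j else 0} ∪
  {z | ∃ a b : Fin g, ∃ i j : Fin n, i ≠ j ∧ z = ⁅gX a i, gX b j⁆} ∪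
  {z | ∃ a b : Fin g, ∃ i j : Fin n, i ≠ j ∧ z = ⁅gY a i, gY b j⁆} ∪
  {z | ∃ i : Fin n, z = (∑ a : Fin g, ⁅gX a i, gY a i⁆)
      + ∑ j ∈ Finset.univ.filter (fun j => j ≠ i), gT i j} ∪
  {z | ∃ a : Fin g, ∃ i j k : Fin n, i ≠ j ∧ i ≠ k ∧ j ≠ k ∧
      (z = ⁅gX a i, gT j k⁆ ∨ z = ⁅gY a i, gT j k⁆)}

/-- The Lie ideal of relations. -/
def tIdeal (g n : ℕ) : LieIdeal ℂ (TFree g n) := LieSubmodule.lieSpan ℂ _ (tRels g n)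

/-- The Lie algebra `t_{g,n}`, presented by generators and relations. -/
abbrev tLie (g n : ℕ) := TFree g n ⧸ tIdeal g n

/-- The canonical projection `TFree g n → tLie g n`. -/
abbrev tmk {g n : ℕ} : TFree g n → tLie g n := LieSubmodule.Quotient.mk (N := tIdeal g n)

/-- The direct sum `f_g^{⊕ n}` of `n` copies of the free Lie algebra on `g` generators. -/
abbrev freeDS (g n : ℕ) := ⨁ _ : Fin n, FreeLieAlgebra ℂ (Fin g)

/-- The `a`-th generator of the `i`-th copy of `f_g` inside `f_g^{⊕ n}`. -/
def fgen {g n : ℕ} (i : Fin n) (a : Fin g) : freeDS g n :=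
  DirectSum.of (fun _ : Fin n => FreeLieAlgebra ℂ (Fin g)) i (FreeLieAlgebra.of ℂ a)

namespace TLieAux

lemma tmk_rel {g n : ℕ} {z : TFree g n} (h : z ∈ tRels g n) : tmk z = 0 := by
  rw [LieSubmodule.Quotient.mk_eq_zero']
  exact LieSubmodule.subset_lieSpan h

/-- Centralizer trick: if every generator image commutes with `s`, so does every element. -/
lemma lift_bracket_zero {L : Type*} [LieRing L] [LieAlgebra ℂ L] {X : Type}
    (f : X → L) (s : L) (h : ∀ a, ⁅f a, s⁆ = 0) (x : FreeLieAlgebra ℂ X) :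
    ⁅FreeLieAlgebra.lift ℂ f x, s⁆ = 0 := by
  let C : LieSubalgebra ℂ L :=
    { carrier := {z | ⁅z, s⁆ = 0}
      add_mem' := fun {a b} ha hb => by
        simp only [Set.mem_setOf_eq] at *; rw [add_lie, ha, hb, add_zero]
      zero_mem' := by simp
      smul_mem' := fun c a ha => by
        simp only [Set.mem_setOf_eq] at *; rw [smul_lie, ha, smul_zero]
      lie_mem' := fun {a b} ha hb => by
        simp only [Set.mem_setOf_eq] at *; rw [lie_lie, ha, hb, lie_zero, lie_zero, sub_zero] }
  have key : FreeLieAlgebra.lift ℂ f =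
      C.incl.comp (FreeLieAlgebra.lift ℂ (fun a => (⟨f a, h a⟩ : C))) := by
    apply FreeLieAlgebra.hom_ext
    intro a
    simp [FreeLieAlgebra.lift_of_apply]
  rw [key]
  exact (FreeLieAlgebra.lift ℂ (fun a => (⟨f a, h a⟩ : C)) x).2

/-- Values of the projection on the generators. -/
def xval {g n : ℕ} : TGen g n → freeDS g n
  | .x a i => fgen i a
  | .y _ _ => 0
  | .t _ _ => 0

/-- The projection as defined on the free Lie algebra. -/
def phi (g n : ℕ) : TFree g n →ₗ⁅ℂ⁆ freeDS g n := FreeLieAlgebra.lift ℂ xval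

lemma phi_x {g n : ℕ} (a : Fin g) (i : Fin n) : phi g n (gX a i) = fgen i a :=
  FreeLieAlgebra.lift_of_apply ..

lemma phi_y {g n : ℕ} (a : Fin g) (i : Fin n) : phi g n (gY a i) = 0 :=
  FreeLieAlgebra.lift_of_apply ..

lemma phi_t {g n : ℕ} (i j : Fin n) : phi g n (gT i j) = 0 :=
  FreeLieAlgebra.lift_of_apply ..

lemma rels_ker (g n : ℕ) : tIdeal g n ≤ (phi g n).ker := by
  rw [tIdeal, LieSubmodule.lieSpan_le]
  intro z hz
  rw [SetLike.mem_coe, LieHom.mem_ker]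
  rcases hz with ((((⟨a, b, i, j, hij, rfl⟩ | ⟨a, b, i, j, hij, rfl⟩) |
      ⟨a, b, i, j, hij, rfl⟩) | ⟨i, rfl⟩) | ⟨a, i, j, k, hij, hik, hjk, (rfl | rfl)⟩)
  · rw [map_sub, LieHom.map_lie, phi_x, phi_y, lie_zero]
    split <;> simp [phi_t, map_zero]
  · rw [LieHom.map_lie, phi_x, phi_x]
    exact DirectSum.lie_of_of_ne _ hij _ _
  · rw [LieHom.map_lie, phi_y, phi_y, lie_zero]
  · show (phi g n).toLinearMap _ = 0
    rw [map_add, map_sum, map_sum]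
    simp [LieHom.coe_toLinearMap, LieHom.map_lie, phi_x, phi_y, phi_t]
  · rw [LieHom.map_lie, phi_t, lie_zero]
  · rw [LieHom.map_lie, phi_t, lie_zero]

lemma tIdeal_le_ker (g n : ℕ) :
    (tIdeal g n).toSubmodule ≤ LinearMap.ker (phi g n).toLinearMap := by
  intro z hz
  have := rels_ker g n hz
  rw [LieHom.mem_ker] at this
  simpa using this

/-- The underlying linear map of the projection. -/
def piLin (g n : ℕ) : tLie g n →ₗ[ℂ] freeDS g n :=
  (tIdeal g n).toSubmodule.liftQ (phi g n).toLinearMap (tIdeal_le_ker g n)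

lemma piLin_tmk {g n : ℕ} (z : TFree g n) : piLin g n (tmk z) = phi g n z :=
  Submodule.liftQ_apply _ _ _

/-- The projection `π : t_{g,n} → f_g^{⊕n}`. -/
def piHom (g n : ℕ) : tLie g n →ₗ⁅ℂ⁆ freeDS g n where
  toLinearMap := piLin g n
  map_lie' := by
    intro x y
    obtain ⟨x, rfl⟩ := LieSubmodule.Quotient.surjective_mk' (N := tIdeal g n) x
    obtain ⟨y, rfl⟩ := LieSubmodule.Quotient.surjective_mk' (N := tIdeal g n) y
    show piLin g n ⁅tmk x, tmk y⁆ = ⁅piLin g n (tmk x), piLin g n (tmk y)⁆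
    rw [← LieSubmodule.Quotient.mk_bracket, piLin_tmk, piLin_tmk, piLin_tmk]
    exact (phi g n).map_lie x y

lemma piHom_tmk {g n : ℕ} (z : TFree g n) : piHom g n (tmk z) = phi g n z :=
  piLin_tmk z

/-- The `i`-th component of the splitting. -/
def fI (g n : ℕ) (i : Fin n) : FreeLieAlgebra ℂ (Fin g) →ₗ⁅ℂ⁆ tLie g n :=
  FreeLieAlgebra.lift ℂ (fun a => tmk (gX a i))

lemma fI_commute {g n : ℕ} {i j : Fin n} (hij : i ≠ j) (x y : FreeLieAlgebra ℂ (Fin g)) :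
    ⁅fI g n i x, fI g n j y⁆ = 0 := by
  have h1 : ∀ (b : Fin g) (x : FreeLieAlgebra ℂ (Fin g)),
      ⁅fI g n i x, tmk (gX b j)⁆ = 0 := by
    intro b x
    refine lift_bracket_zero _ _ (fun a => ?_) x
    rw [← LieSubmodule.Quotient.mk_bracket]
    exact tmk_rel (Or.inl (Or.inl (Or.inl (Or.inr ⟨a, b, i, j, hij, rfl⟩))))
  have h2 : ∀ b : Fin g, ⁅tmk (gX b j), fI g n i x⁆ = 0 := fun b => by
    rw [← lie_skew, h1 b x, neg_zero]
  have h3 := lift_bracket_zero (fun b => tmk (gX b j)) (fI g n i x) h2 y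
  rw [← lie_skew]
  rw [show (FreeLieAlgebra.lift ℂ (fun b => tmk (gX b j)) : _) = fI g n j from rfl] at h3
  rw [h3, neg_zero]

/-- The splitting `σ : f_g^{⊕n} → t_{g,n}`. -/
def sigmaHom (g n : ℕ) : freeDS g n →ₗ⁅ℂ⁆ tLie g n :=
  DirectSum.toLieAlgebra (R := ℂ) (ι := Fin n)
    (L := fun _ => FreeLieAlgebra ℂ (Fin g)) (tLie g n) (fI g n)
    (fun {i j} hij x y => fI_commute hij x y)

lemma sigmaHom_of {g n : ℕ} (i : Fin n) (v : FreeLieAlgebra ℂ (Fin g)) :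
    sigmaHom g n (DirectSum.of _ i v) = fI g n i v := by
  show DirectSum.toModule ℂ (Fin n) (tLie g n)
      (fun i => (fI g n i : FreeLieAlgebra ℂ (Fin g) →ₗ[ℂ] tLie g n))
      (DirectSum.of _ i v) = fI g n i v
  rw [← DirectSum.lof_eq_of ℂ, DirectSum.toModule_lof]
  rfl

lemma sigma_fgen {g n : ℕ} (i : Fin n) (a : Fin g) :
    sigmaHom g n (fgen i a) = tmk (gX a i) := by
  rw [fgen, sigmaHom_of]
  exact FreeLieAlgebra.lift_of_apply ..

lemma pi_sigma {g n : ℕ} (m : freeDS g n) : piHom g n (sigmaHom g n m) = m := by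
  induction m using DirectSum.induction_on with
  | zero => rw [map_zero, map_zero]
  | of i v =>
    rw [sigmaHom_of]
    have : (piHom g n).comp (fI g n i) =
        DirectSum.lieAlgebraOf ℂ (Fin n) (fun _ => FreeLieAlgebra ℂ (Fin g)) i := by
      apply FreeLieAlgebra.hom_ext
      intro a
      show piHom g n (fI g n i (FreeLieAlgebra.of ℂ a)) = _
      rw [fI, FreeLieAlgebra.lift_of_apply, piHom_tmk, phi_x]
      rfl
    calc piHom g n (fI g n i v) = ((piHom g n).comp (fI g n i)) v := rfl
      _ = DirectSum.lieAlgebraOf ℂ (Fin n) (fun _ => FreeLieAlgebra ℂ (Fin g)) i v := by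
            rw [this]
      _ = DirectSum.of _ i v := rfl
  | add x y hx hy => rw [map_add, map_add, hx, hy]

end TLieAux

/-- The Lie algebra `t_{g,n}` decomposes as a semidirect product
`t_{g,n} ≅ u ⋊ f_g^{⊕n}`: there is a surjection `π : t_{g,n} → f_g^{⊕n}` killing the
`y_a^i` and the `t_{ij}` and sending `x_a^i` to the `a`-th generator of the `i`-th copy,
a splitting `σ : f_g^{⊕n} → t_{g,n}` sending that generator to `x_a^i` with `π ∘ σ = id`,
and every element of `t_{g,n}` is uniquely the sum of an element of `u = ker π` and an
element of `σ(f_g^{⊕n})`. -/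
theorem tLie_semidirect (g n : ℕ) :
    ∃ (π : tLie g n →ₗ⁅ℂ⁆ freeDS g n) (σ : freeDS g n →ₗ⁅ℂ⁆ tLie g n),
      (∀ (a : Fin g) (i : Fin n), π (tmk (gX a i)) = fgen i a) ∧
      (∀ (a : Fin g) (i : Fin n), π (tmk (gY a i)) = 0) ∧
      (∀ i j : Fin n, i ≠ j → π (tmk (gT i j)) = 0) ∧
      (∀ (i : Fin n) (a : Fin g), σ (fgen i a) = tmk (gX a i)) ∧
      Function.Surjective π ∧
      π.comp σ = LieHom.id ∧
      (∀ z : tLie g n, ∃! p : π.ker × freeDS g n, z = ↑p.1 + σ p.2) := by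
  classical
  refine ⟨TLieAux.piHom g n, TLieAux.sigmaHom g n, ?_, ?_, ?_, ?_, ?_, ?_, ?_⟩
  · intro a i; rw [TLieAux.piHom_tmk, TLieAux.phi_x]
  · intro a i; rw [TLieAux.piHom_tmk, TLieAux.phi_y]
  · intro i j _; rw [TLieAux.piHom_tmk, TLieAux.phi_t]
  · intro i a; exact TLieAux.sigma_fgen i a
  · intro m; exact ⟨TLieAux.sigmaHom g n m, TLieAux.pi_sigma m⟩
  · exact LieHom.ext fun m => TLieAux.pi_sigma m
  · intro z
    set π := TLieAux.piHom g n
    set σ := TLieAux.sigmaHom g n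
    have hker : z - σ (π z) ∈ π.ker := by
      rw [LieHom.mem_ker, map_sub, TLieAux.pi_sigma, sub_self]
    refine ⟨(⟨z - σ (π z), hker⟩, π z), (sub_add_cancel z (σ (π z))).symm, ?_⟩
    rintro ⟨u, m⟩ h
    have hm : m = π z := by
      have := congrArg π h
      rw [map_add, TLieAux.pi_sigma] at this
      have hu : π (u : tLie g n) = 0 := LieHom.mem_ker.mp u.2
      rw [hu, zero_add] at this
      exact this.symm
    subst hm
    have hu : (u : tLie g n) = z - σ (π z) := eq_sub_of_add_eq h.symm
    exact Prod.ext (Subtype.ext hu) rfl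
end
end

section
/- π_g admits the alternative presentation ⟨Ã_a, B̃_a, a ∈ [g] | Ã_1⋯Ã_g = (B̃_1Ã_1B̃_1^{-1})⋯(B̃_gÃ_gB̃_g^{-1})⟩, via the isomorphism defined by Ã_a = P_a A_a P_a^{-1} and B̃_a = P_a B_a P_a^{-1}, where P_a = Π_{b<a} B_b A_b^{-1} B_b^{-1}. -/
noncomputable section

/-- The generator `A_a`, as an element of the free group. -/
def genA {g : ℕ} (a : Fin g) : FreeGroup (Fin g ⊕ Fin g) := FreeGroup.of (Sum.inl a)

/-- The generator `B_a`, as an element of the free group. -/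
def genB {g : ℕ} (a : Fin g) : FreeGroup (Fin g ⊕ Fin g) := FreeGroup.of (Sum.inr a)

/-- The defining relator `∏_a A_a B_a A_a⁻¹ B_a⁻¹` of the genus-`g` surface group. -/
def surfaceRels (g : ℕ) : Set (FreeGroup (Fin g ⊕ Fin g)) :=
  {((List.finRange g).map fun a => genA a * genB a * (genA a)⁻¹ * (genB a)⁻¹).prod}

/-- The genus-`g` surface group `π_g`. -/
abbrev SurfaceGroup (g : ℕ) := PresentedGroup (surfaceRels g)

/-- The alternative relator `(Ã_1⋯Ã_g) · ((B̃_1Ã_1B̃_1⁻¹)⋯(B̃_gÃ_gB̃_g⁻¹))⁻¹`. -/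
def altRels (g : ℕ) : Set (FreeGroup (Fin g ⊕ Fin g)) :=
  {(((List.finRange g).map fun a => genA a).prod) *
    (((List.finRange g).map fun a => genB a * genA a * (genB a)⁻¹).prod)⁻¹}

/-- The element `A_a` of `π_g`. -/
def Ag {g : ℕ} (a : Fin g) : SurfaceGroup g := PresentedGroup.of (Sum.inl a)

/-- The element `B_a` of `π_g`. -/
def Bg {g : ℕ} (a : Fin g) : SurfaceGroup g := PresentedGroup.of (Sum.inr a)

/-- The element `P_a = ∏_{b<a} B_b A_b⁻¹ B_b⁻¹` of `π_g`. -/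
def Pg {g : ℕ} (a : Fin g) : SurfaceGroup g :=
  (((List.finRange g).filter fun b => b < a).map fun b => Bg b * (Ag b)⁻¹ * (Bg b)⁻¹).prod

namespace SurfaceAlt

/- list lemmas -/

lemma take_succ_finRange {g k : ℕ} (hk : k < g) :
    (List.finRange g).take (k+1) = (List.finRange g).take k ++ [⟨k, hk⟩] := by
  rw [List.take_succ]
  congr 1
  rw [List.getElem?_eq_getElem (by simpa using hk)]
  simp

lemma filter_lt_eq_take {g : ℕ} (a : Fin g) :
    ((List.finRange g).filter fun b => b < a) = (List.finRange g).take a.val := by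
  conv_lhs => rw [← List.take_append_drop a.val (List.finRange g)]
  rw [List.filter_append]
  have h1 : ((List.finRange g).take a.val).filter (fun b => b < a)
      = (List.finRange g).take a.val := by
    rw [List.filter_eq_self]
    intro x hx
    obtain ⟨i, hi, rfl⟩ := List.mem_iff_getElem.1 hx
    have hi' : i < a.val := by simp at hi; omega
    simp [List.getElem_take, List.getElem_finRange, Fin.lt_def, hi']
  have h2 : ((List.finRange g).drop a.val).filter (fun b => b < a) = [] := by
    rw [List.filter_eq_nil_iff]
    intro x hx
    obtain ⟨i, hi, rfl⟩ := List.mem_iff_getElem.1 hx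
    simp [List.getElem_drop, List.getElem_finRange, Fin.lt_def]
  rw [h1, h2, List.append_nil]

/- abstract telescoping identities -/

variable {G : Type*} [Group G] {g : ℕ}

/-- `x_b = β_b α_b⁻¹ β_b⁻¹`. -/
def xE (α β : Fin g → G) (b : Fin g) : G := β b * (α b)⁻¹ * (β b)⁻¹

/-- `P_k = x_0 x_1 ⋯ x_{k-1}`. -/
def PE (α β : Fin g → G) (k : ℕ) : G := (((List.finRange g).take k).map (xE α β)).prod

/-- `Q_k = x_{k-1} ⋯ x_1 x_0`. -/
def QE (α β : Fin g → G) (k : ℕ) : G :=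
  ((((List.finRange g).take k).reverse).map (xE α β)).prod

lemma PE_zero (α β : Fin g → G) : PE α β 0 = 1 := by simp [PE]

lemma QE_zero (α β : Fin g → G) : QE α β 0 = 1 := by simp [QE]

lemma PE_succ (α β : Fin g → G) {k : ℕ} (hk : k < g) :
    PE α β (k+1) = PE α β k * xE α β ⟨k, hk⟩ := by
  simp [PE, take_succ_finRange hk]

lemma QE_succ (α β : Fin g → G) {k : ℕ} (hk : k < g) :
    QE α β (k+1) = xE α β ⟨k, hk⟩ * QE α β k := by
  simp [QE, take_succ_finRange hk]

lemma I1 (α β : Fin g → G) : ∀ k, k ≤ g →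
    (((List.finRange g).take k).map
        (fun a => PE α β a.val * α a * (PE α β a.val)⁻¹)).prod
      = (((List.finRange g).take k).map
          (fun a => α a * β a * (α a)⁻¹ * (β a)⁻¹)).prod * (PE α β k)⁻¹ := by
  intro k
  induction k with
  | zero => simp [PE]
  | succ k ih =>
    intro hk
    have hk' : k < g := hk
    rw [take_succ_finRange hk', List.map_append, List.prod_append, List.map_append,
      List.prod_append, ih hk'.le, PE_succ α β hk']
    simp only [List.map_cons, List.map_nil, List.prod_cons, List.prod_nil]
    unfold xE
    group

lemma I2 (α β : Fin g → G) : ∀ k, k ≤ g →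
    (((List.finRange g).take k).map
        (fun a => PE α β a.val * (β a * α a * (β a)⁻¹) * (PE α β a.val)⁻¹)).prod
      = (PE α β k)⁻¹ := by
  intro k
  induction k with
  | zero => simp [PE]
  | succ k ih =>
    intro hk
    have hk' : k < g := hk
    rw [take_succ_finRange hk', List.map_append, List.prod_append, ih hk'.le,
      PE_succ α β hk']
    simp only [List.map_cons, List.map_nil, List.prod_cons, List.prod_nil]
    unfold xE
    group

lemma I3 (α β : Fin g → G) : ∀ k, k ≤ g →
    (((List.finRange g).take k).map
        (fun a => (QE α β a.val)⁻¹ * (α a * β a * (α a)⁻¹ * (β a)⁻¹) * QE α β a.val)).prod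
      = (((List.finRange g).take k).map α).prod * QE α β k := by
  intro k
  induction k with
  | zero => simp [QE]
  | succ k ih =>
    intro hk
    have hk' : k < g := hk
    rw [take_succ_finRange hk', List.map_append, List.prod_append, List.map_append,
      List.prod_append, ih hk'.le, QE_succ α β hk']
    simp only [List.map_cons, List.map_nil, List.prod_cons, List.prod_nil]
    unfold xE
    group

lemma I4 (α β : Fin g → G) : ∀ k, k ≤ g →
    QE α β k = ((((List.finRange g).take k).map (fun a => β a * α a * (β a)⁻¹)).prod)⁻¹ := by
  intro k
  induction k with
  | zero => simp [QE]
  | succ k ih =>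
    intro hk
    have hk' : k < g := hk
    rw [QE_succ α β hk', ih hk'.le, take_succ_finRange hk', List.map_append, List.prod_append]
    simp only [List.map_cons, List.map_nil, List.prod_cons, List.prod_nil]
    unfold xE
    group

lemma I5 (α β : Fin g → G) : ∀ k, k ≤ g →
    ((((List.finRange g).take k).reverse).map
        (fun b => PE α β b.val * xE α β b * (PE α β b.val)⁻¹)).prod = PE α β k := by
  intro k
  induction k with
  | zero => simp [PE]
  | succ k ih =>
    intro hk
    have hk' : k < g := hk
    rw [take_succ_finRange hk', List.reverse_append, PE_succ α β hk']
    simp only [List.reverse_cons, List.reverse_nil, List.nil_append, List.map_cons,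
      List.prod_cons, List.map_append, List.prod_append]
    rw [ih hk'.le]
    simp only [List.map_cons, List.map_nil, List.prod_cons, List.prod_nil]
    group

lemma I6 (α β : Fin g → G) : ∀ k, k ≤ g →
    (((List.finRange g).take k).map
        (fun b => (QE α β b.val)⁻¹ * xE α β b * QE α β b.val)).prod = QE α β k := by
  intro k
  induction k with
  | zero => simp [QE]
  | succ k ih =>
    intro hk
    have hk' : k < g := hk
    rw [take_succ_finRange hk', List.map_append, List.prod_append, ih hk'.le,
      QE_succ α β hk']
    simp only [List.map_cons, List.map_nil, List.prod_cons, List.prod_nil]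
    group

/- the groups and maps -/

variable (g : ℕ)

/-- `Ã_a` in the alternative presented group. -/
def Ap (a : Fin g) : PresentedGroup (altRels g) := PresentedGroup.of (Sum.inl a)

/-- `B̃_a` in the alternative presented group. -/
def Bp (a : Fin g) : PresentedGroup (altRels g) := PresentedGroup.of (Sum.inr a)

/-- `Q_a` in the alternative presented group. -/
def Qp (a : Fin g) : PresentedGroup (altRels g) := QE (Ap g) (Bp g) a.val

lemma Pg_eq (a : Fin g) : Pg a = PE Ag Bg a.val := by
  unfold Pg PE
  rw [filter_lt_eq_take]
  rfl

lemma mk_rel_surface :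
    (((List.finRange g).map fun a => Ag a * Bg a * (Ag a)⁻¹ * (Bg a)⁻¹)).prod = 1 := by
  have key : (PresentedGroup.mk (surfaceRels g))
      (((List.finRange g).map fun a => genA a * genB a * (genA a)⁻¹ * (genB a)⁻¹).prod) = 1 :=
    (QuotientGroup.eq_one_iff _).2 (Subgroup.subset_normalClosure rfl)
  rw [map_list_prod, List.map_map] at key
  convert key using 3 <;> rfl

lemma mk_rel_alt :
    (((List.finRange g).map (Ap g)).prod)
      = (((List.finRange g).map fun a => Bp g a * Ap g a * (Bp g a)⁻¹).prod) := by
  have key : (PresentedGroup.mk (altRels g))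
      ((((List.finRange g).map fun a => genA a).prod) *
        (((List.finRange g).map fun a => genB a * genA a * (genB a)⁻¹).prod)⁻¹) = 1 :=
    (QuotientGroup.eq_one_iff _).2 (Subgroup.subset_normalClosure rfl)
  rw [map_mul, map_inv, map_list_prod, map_list_prod, List.map_map, List.map_map,
    mul_inv_eq_one] at key
  convert key using 3 <;> rfl

/-- The map `Ã_a ↦ P_a A_a P_a⁻¹`, `B̃_a ↦ P_a B_a P_a⁻¹`. -/
def Ffun : Fin g ⊕ Fin g → SurfaceGroup g :=
  Sum.elim (fun a => Pg a * Ag a * (Pg a)⁻¹) (fun a => Pg a * Bg a * (Pg a)⁻¹)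

/-- The map `A_a ↦ Q_a⁻¹ Ã_a Q_a`, `B_a ↦ Q_a⁻¹ B̃_a Q_a`. -/
def Hfun : Fin g ⊕ Fin g → PresentedGroup (altRels g) :=
  Sum.elim (fun a => (Qp g a)⁻¹ * Ap g a * Qp g a) (fun a => (Qp g a)⁻¹ * Bp g a * Qp g a)

lemma hF : ∀ r ∈ altRels g, FreeGroup.lift (Ffun g) r = 1 := by
  intro r hr
  rw [Set.mem_singleton_iff.1 hr]
  rw [map_mul, map_inv, map_list_prod, map_list_prod, List.map_map, List.map_map]
  have e1 : ((FreeGroup.lift (Ffun g)) ∘ fun a : Fin g => genA a)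
      = fun a : Fin g => PE Ag Bg a.val * Ag a * (PE Ag Bg a.val)⁻¹ := by
    funext a
    simp only [Function.comp_apply, genA, FreeGroup.lift_apply_of, Ffun, Sum.elim_inl, Pg_eq]
  have e2 : ((FreeGroup.lift (Ffun g)) ∘ fun a : Fin g => genB a * genA a * (genB a)⁻¹)
      = fun a : Fin g => PE Ag Bg a.val * (Bg a * Ag a * (Bg a)⁻¹) * (PE Ag Bg a.val)⁻¹ := by
    funext a
    simp only [Function.comp_apply, map_mul, map_inv, genA, genB, FreeGroup.lift_apply_of,
      Ffun, Sum.elim_inl, Sum.elim_inr, Pg_eq]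
    group
  rw [e1, e2]
  have t1 := I1 Ag Bg g le_rfl
  have t2 := I2 Ag Bg g le_rfl
  rw [List.take_of_length_le (by simp)] at t1 t2
  rw [t1, t2, mk_rel_surface]
  group

end SurfaceAlt

namespace SurfaceAlt2
open SurfaceAlt

variable (g : ℕ)

lemma hH : ∀ r ∈ surfaceRels g, FreeGroup.lift (Hfun g) r = 1 := by
  intro r hr
  rw [Set.mem_singleton_iff.1 hr]
  rw [map_list_prod, List.map_map]
  have e1 : ((FreeGroup.lift (Hfun g)) ∘
        fun a : Fin g => genA a * genB a * (genA a)⁻¹ * (genB a)⁻¹)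
      = fun a : Fin g => (QE (Ap g) (Bp g) a.val)⁻¹ *
          (Ap g a * Bp g a * (Ap g a)⁻¹ * (Bp g a)⁻¹) * QE (Ap g) (Bp g) a.val := by
    funext a
    simp only [Function.comp_apply, map_mul, map_inv, genA, genB, FreeGroup.lift_apply_of,
      Hfun, Sum.elim_inl, Sum.elim_inr, Qp]
    group
  have t3 := I3 (Ap g) (Bp g) g le_rfl
  have t4 := I4 (Ap g) (Bp g) g le_rfl
  rw [List.take_of_length_le (by simp)] at t3 t4
  rw [e1, t3, t4, ← mk_rel_alt]
  group

/-- The forward homomorphism. -/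
def fwd : PresentedGroup (altRels g) →* SurfaceGroup g := PresentedGroup.toGroup (hF g)

/-- The backward homomorphism. -/
def bwd : SurfaceGroup g →* PresentedGroup (altRels g) := PresentedGroup.toGroup (hH g)

lemma fwd_Ap (a : Fin g) : fwd g (Ap g a) = Pg a * Ag a * (Pg a)⁻¹ :=
  PresentedGroup.toGroup.of _

lemma fwd_Bp (a : Fin g) : fwd g (Bp g a) = Pg a * Bg a * (Pg a)⁻¹ :=
  PresentedGroup.toGroup.of _

lemma bwd_Ag (a : Fin g) : bwd g (Ag a) = (Qp g a)⁻¹ * Ap g a * Qp g a :=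
  PresentedGroup.toGroup.of _

lemma bwd_Bg (a : Fin g) : bwd g (Bg a) = (Qp g a)⁻¹ * Bp g a * Qp g a :=
  PresentedGroup.toGroup.of _

lemma bwd_Pg (a : Fin g) : bwd g (Pg a) = Qp g a := by
  rw [Pg_eq]
  unfold PE
  rw [map_list_prod, List.map_map]
  have e : ((bwd g) ∘ xE Ag Bg) = fun b : Fin g =>
      (QE (Ap g) (Bp g) b.val)⁻¹ * xE (Ap g) (Bp g) b * QE (Ap g) (Bp g) b.val := by
    funext b
    simp only [Function.comp_apply, xE, map_mul, map_inv, bwd_Ag, bwd_Bg, Qp]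
    group
  rw [e, I6 (Ap g) (Bp g) a.val a.isLt.le]
  rfl

lemma fwd_Qp (a : Fin g) : fwd g (Qp g a) = Pg a := by
  unfold Qp QE
  rw [map_list_prod, List.map_map]
  have e : ((fwd g) ∘ xE (Ap g) (Bp g)) = fun b : Fin g =>
      PE Ag Bg b.val * xE Ag Bg b * (PE Ag Bg b.val)⁻¹ := by
    funext b
    simp only [Function.comp_apply, xE, map_mul, map_inv, fwd_Ap, fwd_Bp, Pg_eq]
    group
  rw [e, I5 Ag Bg a.val a.isLt.le, ← Pg_eq]

lemma left_inv : (bwd g).comp (fwd g) = MonoidHom.id _ := by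
  apply PresentedGroup.ext
  rintro (a | a)
  · show bwd g (fwd g (Ap g a)) = Ap g a
    rw [fwd_Ap, map_mul, map_mul, map_inv, bwd_Pg, bwd_Ag]
    group
  · show bwd g (fwd g (Bp g a)) = Bp g a
    rw [fwd_Bp, map_mul, map_mul, map_inv, bwd_Pg, bwd_Bg]
    group

lemma right_inv : (fwd g).comp (bwd g) = MonoidHom.id _ := by
  apply PresentedGroup.ext
  rintro (a | a)
  · show fwd g (bwd g (Ag a)) = Ag a
    rw [bwd_Ag, map_mul, map_mul, map_inv, fwd_Qp, fwd_Ap]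
    group
  · show fwd g (bwd g (Bg a)) = Bg a
    rw [bwd_Bg, map_mul, map_mul, map_inv, fwd_Qp, fwd_Bp]
    group

end SurfaceAlt2


/-- `π_g` admits the alternative presentation
`⟨Ã_a, B̃_a | Ã_1⋯Ã_g = (B̃_1Ã_1B̃_1⁻¹)⋯(B̃_gÃ_gB̃_g⁻¹)⟩`, via the isomorphism defined by
`Ã_a ↦ P_a A_a P_a⁻¹` and `B̃_a ↦ P_a B_a P_a⁻¹`, where `P_a = ∏_{b<a} B_b A_b⁻¹ B_b⁻¹`. -/
theorem surfaceGroup_alt_presentation (g : ℕ) :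
    ∃ e : PresentedGroup (altRels g) ≃* SurfaceGroup g,
      ∀ a : Fin g,
        e (PresentedGroup.of (Sum.inl a)) = Pg a * Ag a * (Pg a)⁻¹ ∧
        e (PresentedGroup.of (Sum.inr a)) = Pg a * Bg a * (Pg a)⁻¹ := by
  exact ⟨MonoidHom.toMulEquiv (SurfaceAlt2.fwd g) (SurfaceAlt2.bwd g)
      (SurfaceAlt2.left_inv g) (SurfaceAlt2.right_inv g),
    fun a => ⟨SurfaceAlt2.fwd_Ap g a, SurfaceAlt2.fwd_Bp g a⟩⟩
end
end

section
/- Let f_g be the free Lie algebra on x_1,…,x_g, F = U(f_g), and let M, M_{ij}, M_{ijk} be the F^{⊗n}-modules defined below. If M and N are ℕ-graded F^{⊗n}-modules (grading compatible with |x_a^i| = 1) and M or N satisfies property (P), then M ⊗ N satisfies property (P). [Property (P) for a module Z: the map Z^{[g]×[g]} → Z^{[g]³×([n]−{i,j})} ⊕ Z^{[g]} ⊕ Z^{[g]} sending (β_{ab}) to ((x_c^k·β_{ab})_{a,b,c;k≠i,j}, (Σ_c x_c^i·β_{ca})_a, (Σ_c x_c^j·β_{ac})_a) is injective.] -/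
open scoped TensorProduct

noncomputable section

def PropertyP {g n : ℕ} {Z : Type*} [AddCommGroup Z] [Module ℂ Z]
    (act : Fin g → Fin n → Module.End ℂ Z) (i j : Fin n) : Prop :=
  Function.Injective
    (fun β : Fin g → Fin g → Z =>
      ((fun (a b c : Fin g) (k : {k : Fin n // k ≠ i ∧ k ≠ j}) => act c k.1 (β a b)),
       (fun a : Fin g => ∑ c : Fin g, act c i (β c a)),
       (fun a : Fin g => ∑ c : Fin g, act c j (β a c))))

section Aux

variable {g n : ℕ}

lemma propertyP_of_ker {Z : Type*} [AddCommGroup Z] [Module ℂ Z]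
    (act : Fin g → Fin n → Module.End ℂ Z) (i j : Fin n)
    (h : ∀ β : Fin g → Fin g → Z,
      (∀ (a b c : Fin g) (k : {k : Fin n // k ≠ i ∧ k ≠ j}), act c k.1 (β a b) = 0) →
      (∀ a : Fin g, ∑ c : Fin g, act c i (β c a) = 0) →
      (∀ a : Fin g, ∑ c : Fin g, act c j (β a c) = 0) → β = 0) :
    PropertyP act i j := by
  intro β₁ β₂ heq
  simp only [Prod.mk.injEq] at heq
  obtain ⟨h1, h2, h3⟩ := heq
  have key := h (β₁ - β₂) ?_ ?_ ?_
  · funext a b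
    have := congrFun (congrFun key a) b
    simpa [sub_eq_zero] using this
  · intro a b c k
    have := congrFun (congrFun (congrFun (congrFun h1 a) b) c) k
    simp only [Pi.sub_apply, map_sub, this, sub_self]
  · intro a
    have := congrFun h2 a
    simp only [Pi.sub_apply, map_sub, Finset.sum_sub_distrib, this, sub_self]
  · intro a
    have := congrFun h3 a
    simp only [Pi.sub_apply, map_sub, Finset.sum_sub_distrib, this, sub_self]

lemma propertyP_ker {Z : Type*} [AddCommGroup Z] [Module ℂ Z]
    {act : Fin g → Fin n → Module.End ℂ Z} {i j : Fin n}
    (hP : PropertyP act i j) (β : Fin g → Fin g → Z)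
    (h1 : ∀ (a b c : Fin g) (k : {k : Fin n // k ≠ i ∧ k ≠ j}), act c k.1 (β a b) = 0)
    (h2 : ∀ a : Fin g, ∑ c : Fin g, act c i (β c a) = 0)
    (h3 : ∀ a : Fin g, ∑ c : Fin g, act c j (β a c) = 0) : β = 0 := by
  apply hP
  simp only [Prod.mk.injEq]
  refine ⟨?_, ?_, ?_⟩
  · funext a b c k
    simp [h1 a b c k]
  · funext a
    simp [h2 a]
  · funext a
    simp [h3 a]

lemma propertyP_rTensor {M N : Type*} [AddCommGroup M] [Module ℂ M]
    [AddCommGroup N] [Module ℂ N]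
    (act : Fin g → Fin n → Module.End ℂ M) (i j : Fin n) (hP : PropertyP act i j) :
    PropertyP (fun a k => ((act a k).rTensor N : Module.End ℂ (M ⊗[ℂ] N))) i j := by
  classical
  apply propertyP_of_ker
  intro γ h1 h2 h3
  set b : Module.Basis (Module.Basis.ofVectorSpaceIndex ℂ N) ℂ N := Module.Basis.ofVectorSpace ℂ N with hb
  set E : M ⊗[ℂ] N ≃ₗ[ℂ] (Module.Basis.ofVectorSpaceIndex ℂ N →₀ M) :=
    (LinearEquiv.lTensor M b.repr).trans (TensorProduct.finsuppScalarRight ℂ ℂ M _) with hE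
  have hEr : ∀ (u : Module.End ℂ M) (t : M ⊗[ℂ] N) s, E (u.rTensor N t) s = u (E t s) := by
    intro u t s
    induction t using TensorProduct.induction_on with
    | zero => simp
    | tmul m x =>
        simp [hE, LinearMap.rTensor_tmul]
    | add t1 t2 ih1 ih2 => simp [map_add, ih1, ih2]
  have main : ∀ s, (fun a b : Fin g => E (γ a b) s) = 0 := by
    intro s
    apply propertyP_ker hP
    · intro a b c k
      rw [← hEr]
      rw [h1 a b c k]
      simp
    · intro a
      have h0 : E (∑ c : Fin g, (act c i).rTensor N (γ c a)) s = 0 := by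
        rw [h2 a]; simp
      rw [map_sum, Finsupp.finset_sum_apply] at h0
      rw [← h0]
      exact Finset.sum_congr rfl fun c _ => (hEr _ _ _).symm
    · intro a
      have h0 : E (∑ c : Fin g, (act c j).rTensor N (γ a c)) s = 0 := by
        rw [h3 a]; simp
      rw [map_sum, Finsupp.finset_sum_apply] at h0
      rw [← h0]
      exact Finset.sum_congr rfl fun c _ => (hEr _ _ _).symm
  funext a b'
  have h0 : E (γ a b') = 0 := by
    ext s
    have := congrFun (congrFun (main s) a) b'
    simpa using this
  have := E.map_eq_zero_iff.mp h0
  simpa using this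

def grProj {N : Type*} [AddCommGroup N] [Module ℂ N]
    (grN : ℕ → Submodule ℂ N) (hNint : DirectSum.IsInternal grN) (q : ℕ) :
    Module.End ℂ N :=
  (grN q).subtype ∘ₗ (DirectSum.component ℂ ℕ (fun q => grN q) q) ∘ₗ
    ((LinearEquiv.ofBijective (DirectSum.coeLinearMap grN) hNint).symm).toLinearMap

lemma grProj_of_mem {N : Type*} [AddCommGroup N] [Module ℂ N]
    (grN : ℕ → Submodule ℂ N) (hNint : DirectSum.IsInternal grN)
    {d : ℕ} {x : N} (hx : x ∈ grN d) (p : ℕ) :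
    grProj grN hNint p x = if p = d then x else 0 := by
  by_cases hpd : p = d
  · subst hpd
    have hc : (DirectSum.component ℂ ℕ (fun q => grN q) p)
        ((LinearEquiv.ofBijective (DirectSum.coeLinearMap grN) hNint).symm x) = ⟨x, hx⟩ := by
      rw [← DirectSum.apply_eq_component]
      exact hNint.ofBijective_coeLinearMap_of_mem hx
    simp [grProj, LinearMap.comp_apply, hc]
  · have hc : (DirectSum.component ℂ ℕ (fun q => grN q) p)
        ((LinearEquiv.ofBijective (DirectSum.coeLinearMap grN) hNint).symm x) = 0 := by
      rw [← DirectSum.apply_eq_component]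
      exact hNint.ofBijective_coeLinearMap_of_mem_ne (Ne.symm hpd) hx
    simp [grProj, LinearMap.comp_apply, hc, hpd]

lemma propertyP_tensor_left {M N : Type*} [AddCommGroup M] [Module ℂ M]
    [AddCommGroup N] [Module ℂ N] (i j : Fin n)
    (actM : Fin g → Fin n → Module.End ℂ M) (actN : Fin g → Fin n → Module.End ℂ N)
    (grN : ℕ → Submodule ℂ N) (hNint : DirectSum.IsInternal grN)
    (hNgr : ∀ (a : Fin g) (k : Fin n) (d : ℕ), ∀ m ∈ grN d, actN a k m ∈ grN (d + 1))
    (hPM : PropertyP actM i j) :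
    PropertyP
      (fun a k => LinearMap.rTensor N (actM a k) + LinearMap.lTensor M (actN a k)) i j := by
  classical
  apply propertyP_of_ker
  intro β h1 h2 h3
  by_contra hne
  set cb : ∀ q : ℕ, Module.Basis (Module.Basis.ofVectorSpaceIndex ℂ (grN q)) ℂ (grN q) :=
    fun q => Module.Basis.ofVectorSpace ℂ (grN q) with hcb
  set bN : Module.Basis (Σ q : ℕ, Module.Basis.ofVectorSpaceIndex ℂ (grN q)) ℂ N :=
    hNint.collectedBasis cb with hbN
  set pr : ℕ → Module.End ℂ N := grProj grN hNint with hpr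
  have prA : ∀ (d : ℕ) (x : N), x ∈ grN d → ∀ p : ℕ, pr p x = if p = d then x else 0 :=
    fun d x hx p => grProj_of_mem grN hNint hx p
  have prBasis : ∀ (p : ℕ) s, pr p (bN s) = if p = s.1 then bN s else 0 :=
    fun p s => prA s.1 (bN s) (hNint.collectedBasis_mem cb s) p
  have hprcomm : ∀ (a : Fin g) (k : Fin n) (q : ℕ),
      pr (q + 1) ∘ₗ actN a k = actN a k ∘ₗ pr q := by
    intro a k q
    apply Module.Basis.ext bN
    intro s
    have hL : (pr (q + 1) ∘ₗ actN a k) (bN s)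
        = if q + 1 = s.1 + 1 then actN a k (bN s) else 0 := by
      rw [LinearMap.comp_apply]
      exact prA (s.1 + 1) (actN a k (bN s)) (hNgr a k s.1 _ (hNint.collectedBasis_mem cb s)) (q + 1)
    have hR : (actN a k ∘ₗ pr q) (bN s) = actN a k (if q = s.1 then bN s else 0) := by
      rw [LinearMap.comp_apply, prBasis]
    rw [hL, hR]
    by_cases h : q = s.1 <;> simp [h]
  have hprzero : ∀ (a : Fin g) (k : Fin n), pr 0 ∘ₗ actN a k = 0 := by
    intro a k
    apply Module.Basis.ext bN
    intro s
    have hL : (pr 0 ∘ₗ actN a k) (bN s) = if 0 = s.1 + 1 then actN a k (bN s) else 0 := by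
      rw [LinearMap.comp_apply]
      exact prA (s.1 + 1) (actN a k (bN s)) (hNgr a k s.1 _ (hNint.collectedBasis_mem cb s)) 0
    rw [hL]
    simp
  set E : M ⊗[ℂ] N ≃ₗ[ℂ] ((Σ q : ℕ, Module.Basis.ofVectorSpaceIndex ℂ (grN q)) →₀ M) :=
    (LinearEquiv.lTensor M bN.repr).trans (TensorProduct.finsuppScalarRight ℂ ℂ M _) with hE
  have C1 : ∀ (q : ℕ) s (x : N), bN.repr (pr q x) s = if s.1 = q then bN.repr x s else 0 := by
    intro q s x
    have hmaps : (Finsupp.lapply s ∘ₗ bN.repr.toLinearMap ∘ₗ pr q)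
        = if s.1 = q then (Finsupp.lapply s ∘ₗ bN.repr.toLinearMap) else 0 := by
      apply Module.Basis.ext bN
      intro s'
      rw [LinearMap.comp_apply, LinearMap.comp_apply, prBasis]
      rw [apply_ite (fun (f : N →ₗ[ℂ] ℂ) => f (bN s'))]
      by_cases hq : q = s'.1
      · rw [if_pos hq]
        by_cases hsq : s.1 = q
        · rw [if_pos hsq, LinearMap.comp_apply]
        · rw [if_neg hsq]
          have hss' : s ≠ s' := fun h => hsq (by rw [h, hq])
          simp [Module.Basis.repr_self, Finsupp.single_apply, Ne.symm hss']
      · rw [if_neg hq]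
        by_cases hsq : s.1 = q
        · rw [if_pos hsq]
          have hss' : s ≠ s' := fun h => hq (by rw [← h, hsq])
          simp [Module.Basis.repr_self, Finsupp.single_apply, Ne.symm hss']
        · rw [if_neg hsq]
          simp
    have := congrArg (fun (f : N →ₗ[ℂ] ℂ) => f x) hmaps
    simpa [apply_ite (fun (f : N →ₗ[ℂ] ℂ) => f x)] using this
  have F3 : ∀ (q : ℕ) (t : M ⊗[ℂ] N) s,
      E ((pr q).lTensor M t) s = if s.1 = q then E t s else 0 := by
    intro q t s
    induction t using TensorProduct.induction_on with
    | zero => simp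
    | tmul m x =>
        have : E (m ⊗ₜ[ℂ] pr q x) s = bN.repr (pr q x) s • m := by
          simp [hE]
        rw [LinearMap.lTensor_tmul, this, C1]
        have : E (m ⊗ₜ[ℂ] x) s = bN.repr x s • m := by simp [hE]
        rw [this]
        split <;> simp
    | add t1 t2 ih1 ih2 =>
        simp only [map_add, Finsupp.add_apply, ih1, ih2]
        split <;> simp
  have tzero : ∀ t : M ⊗[ℂ] N, (∀ q : ℕ, (pr q).lTensor M t = 0) → t = 0 := by
    intro t ht
    apply E.injective
    rw [map_zero]
    ext s
    have h0 := F3 s.1 t s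
    rw [ht s.1, map_zero] at h0
    simp only [Finsupp.coe_zero, Pi.zero_apply] at h0 ⊢
    simpa using h0.symm
  have hexab : ∃ a b, β a b ≠ 0 := by
    by_contra h
    push_neg at h
    exact hne (funext fun a => funext fun b => h a b)
  have hex : ∃ q : ℕ, ∃ a b, (pr q).lTensor M (β a b) ≠ 0 := by
    obtain ⟨a, b, hab⟩ := hexab
    by_contra h
    push_neg at h
    exact hab (tzero _ fun q => h q a b)
  set q₀ := Nat.find hex with hq₀def
  obtain ⟨a₀, b₀, hne₀⟩ := Nat.find_spec hex
  have hmin : ∀ q', q' < q₀ → ∀ a b, (pr q').lTensor M (β a b) = 0 := by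
    intro q' hlt a b
    have := Nat.find_min hex hlt
    push_neg at this
    exact this a b
  have hLT : ∀ (c : Fin g) (k : Fin n) (x y : Fin g),
      (pr q₀).lTensor M ((actN c k).lTensor M (β x y)) = 0 := by
    intro c k x y
    obtain h0 | hpos := Nat.eq_zero_or_pos q₀
    · rw [h0, ← LinearMap.comp_apply, ← LinearMap.lTensor_comp, hprzero c k]
      simp
    · have hq : q₀ - 1 + 1 = q₀ := Nat.succ_pred_eq_of_pos hpos
      rw [← hq, ← LinearMap.comp_apply, ← LinearMap.lTensor_comp, hprcomm c k,
        LinearMap.lTensor_comp, LinearMap.comp_apply, hmin (q₀ - 1) (by omega) x y, map_zero]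
  have hRT : ∀ (u : Module.End ℂ M) (t : M ⊗[ℂ] N) (q : ℕ),
      u.rTensor N ((pr q).lTensor M t) = (pr q).lTensor M (u.rTensor N t) := by
    intro u t q
    rw [← LinearMap.comp_apply, ← LinearMap.comp_apply,
      LinearMap.rTensor_comp_lTensor, LinearMap.lTensor_comp_rTensor]
  set γ : Fin g → Fin g → M ⊗[ℂ] N := fun x y => (pr q₀).lTensor M (β x y) with hγ
  have h1' : ∀ (x y c : Fin g) (k : {k : Fin n // k ≠ i ∧ k ≠ j}),
      (actM c k.1).rTensor N (γ x y) = 0 := by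
    intro x y c k
    have hx : (actM c k.1).rTensor N (β x y) + (actN c k.1).lTensor M (β x y) = 0 := by
      simpa using h1 x y c k
    show (actM c k.1).rTensor N ((pr q₀).lTensor M (β x y)) = 0
    rw [hRT]
    have := congrArg ((pr q₀).lTensor M) hx
    rw [map_add, hLT, add_zero, map_zero] at this
    exact this
  have h2' : ∀ x : Fin g, ∑ c : Fin g, (actM c i).rTensor N (γ c x) = 0 := by
    intro x
    have hsum : ∑ c : Fin g,
        ((actM c i).rTensor N (β c x) + (actN c i).lTensor M (β c x)) = 0 := by
      simpa using h2 x
    calc ∑ c : Fin g, (actM c i).rTensor N (γ c x)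
        = ∑ c : Fin g, (pr q₀).lTensor M
            ((actM c i).rTensor N (β c x) + (actN c i).lTensor M (β c x)) := by
          refine Finset.sum_congr rfl fun c _ => ?_
          show (actM c i).rTensor N ((pr q₀).lTensor M (β c x)) = _
          rw [hRT, map_add, hLT, add_zero]
      _ = (pr q₀).lTensor M (∑ c : Fin g,
            ((actM c i).rTensor N (β c x) + (actN c i).lTensor M (β c x))) :=
          (map_sum _ _ _).symm
      _ = 0 := by rw [hsum, map_zero]
  have h3' : ∀ x : Fin g, ∑ c : Fin g, (actM c j).rTensor N (γ x c) = 0 := by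
    intro x
    have hsum : ∑ c : Fin g,
        ((actM c j).rTensor N (β x c) + (actN c j).lTensor M (β x c)) = 0 := by
      simpa using h3 x
    calc ∑ c : Fin g, (actM c j).rTensor N (γ x c)
        = ∑ c : Fin g, (pr q₀).lTensor M
            ((actM c j).rTensor N (β x c) + (actN c j).lTensor M (β x c)) := by
          refine Finset.sum_congr rfl fun c _ => ?_
          show (actM c j).rTensor N ((pr q₀).lTensor M (β x c)) = _
          rw [hRT, map_add, hLT, add_zero]
      _ = (pr q₀).lTensor M (∑ c : Fin g,
            ((actM c j).rTensor N (β x c) + (actN c j).lTensor M (β x c))) :=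
          (map_sum _ _ _).symm
      _ = 0 := by rw [hsum, map_zero]
  have hγ0 := propertyP_ker (propertyP_rTensor actM i j hPM) γ h1' h2' h3'
  exact hne₀ (by simpa using congrFun (congrFun hγ0 a₀) b₀)

end Aux

/-- If `M` and `N` are ℕ-graded `F^{⊗n}`-modules (i.e. `ℂ`-modules with
commuting-between-different-indices operators `x_a^k`, each raising the degree of an
internal ℕ-grading by one) and `M` or `N` satisfies property (P), then the tensor product
`M ⊗ N` (with `x_a^k` acting by `x_a^k ⊗ 1 + 1 ⊗ x_a^k`) satisfies property (P). -/
theorem propertyP_tensor {g n : ℕ} (i j : Fin n) (hij : i ≠ j)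
    {M N : Type*} [AddCommGroup M] [Module ℂ M] [AddCommGroup N] [Module ℂ N]
    (actM : Fin g → Fin n → Module.End ℂ M) (actN : Fin g → Fin n → Module.End ℂ N)
    (hMcomm : ∀ (a b : Fin g) (k l : Fin n), k ≠ l → Commute (actM a k) (actM b l))
    (hNcomm : ∀ (a b : Fin g) (k l : Fin n), k ≠ l → Commute (actN a k) (actN b l))
    (grM : ℕ → Submodule ℂ M) (grN : ℕ → Submodule ℂ N)
    (hMint : DirectSum.IsInternal grM) (hNint : DirectSum.IsInternal grN)
    (hMgr : ∀ (a : Fin g) (k : Fin n) (d : ℕ), ∀ m ∈ grM d, actM a k m ∈ grM (d + 1))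
    (hNgr : ∀ (a : Fin g) (k : Fin n) (d : ℕ), ∀ m ∈ grN d, actN a k m ∈ grN (d + 1))
    (hP : PropertyP actM i j ∨ PropertyP actN i j) :
    PropertyP
      (fun a k => LinearMap.rTensor N (actM a k) + LinearMap.lTensor M (actN a k))
      i j := by
  rcases hP with hPM | hPN
  · exact propertyP_tensor_left i j actM actN grN hNint hNgr hPM
  · apply propertyP_of_ker
    intro β h1 h2 h3
    have hC : ∀ (u : Module.End ℂ M) (v : Module.End ℂ N) (t : M ⊗[ℂ] N),
        TensorProduct.comm ℂ M N ((u.rTensor N + v.lTensor M) t)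
          = (v.rTensor M + u.lTensor N) (TensorProduct.comm ℂ M N t) := by
      intro u v t
      induction t using TensorProduct.induction_on with
      | zero => simp
      | tmul m x =>
          simp [LinearMap.add_apply, LinearMap.rTensor_tmul, LinearMap.lTensor_tmul,
            TensorProduct.comm_tmul, add_comm]
      | add t1 t2 ih1 ih2 => simp only [map_add, ih1, ih2]
    have key := propertyP_ker
      (propertyP_tensor_left (M := N) (N := M) i j actN actM grM hMint hMgr hPN)
      (fun a b => TensorProduct.comm ℂ M N (β a b)) ?_ ?_ ?_
    · funext a b
      have h0 := congrFun (congrFun key a) b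
      simp only [Pi.zero_apply] at h0
      exact (map_eq_zero_iff _ (TensorProduct.comm ℂ M N).injective).mp h0
    · intro a b c k
      show (actN c k.1).rTensor M (TensorProduct.comm ℂ M N (β a b))
          + (actM c k.1).lTensor N (TensorProduct.comm ℂ M N (β a b)) = 0
      have := hC (actM c k.1) (actN c k.1) (β a b)
      simp only [LinearMap.add_apply] at this
      rw [← this]
      have h0 : (actM c k.1).rTensor N (β a b) + (actN c k.1).lTensor M (β a b) = 0 := by
        simpa using h1 a b c k
      rw [h0, map_zero]
    · intro a
      have h0 : ∑ c : Fin g,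
          ((actM c i).rTensor N (β c a) + (actN c i).lTensor M (β c a)) = 0 := by
        simpa using h2 a
      calc ∑ c : Fin g, ((actN c i).rTensor M + (actM c i).lTensor N)
              (TensorProduct.comm ℂ M N (β c a))
          = ∑ c : Fin g, TensorProduct.comm ℂ M N
              (((actM c i).rTensor N + (actN c i).lTensor M) (β c a)) :=
            Finset.sum_congr rfl fun c _ => (hC _ _ _).symm
        _ = TensorProduct.comm ℂ M N (∑ c : Fin g,
              (((actM c i).rTensor N + (actN c i).lTensor M) (β c a))) :=
            (map_sum _ _ _).symm
        _ = 0 := by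
            simp only [LinearMap.add_apply]
            rw [h0, map_zero]
    · intro a
      have h0 : ∑ c : Fin g,
          ((actM c j).rTensor N (β a c) + (actN c j).lTensor M (β a c)) = 0 := by
        simpa using h3 a
      calc ∑ c : Fin g, ((actN c j).rTensor M + (actM c j).lTensor N)
              (TensorProduct.comm ℂ M N (β a c))
          = ∑ c : Fin g, TensorProduct.comm ℂ M N
              (((actM c j).rTensor N + (actN c j).lTensor M) (β a c)) :=
            Finset.sum_congr rfl fun c _ => (hC _ _ _).symm
        _ = TensorProduct.comm ℂ M N (∑ c : Fin g,
              (((actM c j).rTensor N + (actN c j).lTensor M) (β a c))) :=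
            (map_sum _ _ _).symm
        _ = 0 := by
            simp only [LinearMap.add_apply]
            rw [h0, map_zero]
end
end
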